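/- Contraction of the quantum hockey-stick divergence under the depolarizing channel (Lemma 3): Let n be a nonempty finite type with d := Fintype.card n, let ρ, ρ' : Matrix n n ℂ be density matrices, let p ∈ [0,1] and γ ≥ 1. With E_p(σ) := (1 - p) • σ + (p/d) • (1 : Matrix n n ℂ), we have Re(Tr((E_p(ρ) - γ • E_p(ρ'))₊)) ≤ max(0, (1 - γ) * p / d + (1 - p) * Re(Tr((ρ - γ • ρ')₊))). -/

import Mathlib

open Matrix
open scoped ComplexOrder

/-- The positive part of a matrix, given by the continuous functional calculus
applied to `fun x => max x 0` (for a Hermitian matrix this replaces each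
eigenvalue `x` in the spectral decomposition by `max x 0`). -/
noncomputable def matPosPart {n : Type*} [Fintype n] [DecidableEq n]
    (A : Matrix n n ℂ) : Matrix n n ℂ :=
  cfc (fun x : ℝ => max x 0) A

/-- The depolarizing channel with parameter `p` on `Matrix n n ℂ`. -/
noncomputable def depolarize {n : Type*} [Fintype n] [DecidableEq n]
    (p : ℝ) (σ : Matrix n n ℂ) : Matrix n n ℂ :=
  (1 - p) • σ + (p / (Fintype.card n : ℝ)) • (1 : Matrix n n ℂ)

lemma trace_cfc_re {n : Type*} [Fintype n] [DecidableEq n]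
    {A : Matrix n n ℂ} (hA : A.IsHermitian) (f : ℝ → ℝ) :
    (cfc f A).trace.re = ∑ i, f (hA.eigenvalues i) := by
  rw [hA.cfc_eq, Matrix.IsHermitian.cfc, Unitary.conjStarAlgAut_apply, Matrix.trace_mul_comm,
    ← mul_assoc, Unitary.coe_star_mul_self, one_mul, Matrix.trace_diagonal]
  simp [Complex.re_sum]

lemma cfc_affine {n : Type*} [Fintype n] [DecidableEq n]
    {A : Matrix n n ℂ} (hA : A.IsHermitian) (c s : ℝ) :
    cfc (fun x : ℝ => c * x + s) A = c • A + s • (1 : Matrix n n ℂ) := by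
  have hA' : IsSelfAdjoint A := hA
  rw [cfc_add A (fun x => c * x) (fun _ => s) (by fun_prop) (by fun_prop),
    cfc_const_mul c _ A (by fun_prop), cfc_id' ℝ A, cfc_const s A,
    Algebra.algebraMap_eq_smul_one]

lemma key_sum_ineq {ι : Type*} [Fintype ι] [DecidableEq ι] (l : ι → ℝ) (c s : ℝ)
    (hc0 : 0 ≤ c) (hs : s ≤ 0) :
    ∑ i, max (c * l i + s) 0 ≤ max 0 (s + c * ∑ i, max (l i) 0) := by
  by_cases h : ∀ i, c * l i + s ≤ 0
  · refine le_trans ?_ (le_max_left _ _)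
    exact le_of_eq (Finset.sum_eq_zero fun i _ => max_eq_right (h i))
  · push_neg at h
    obtain ⟨j, hj⟩ := h
    refine le_trans ?_ (le_max_right _ _)
    have hterm : ∀ i, max (c * l i + s) 0 ≤ c * max (l i) 0 + (if i = j then s else 0) := by
      intro i
      by_cases hij : i = j
      · subst hij
        simp only [if_pos rfl, eq_self_iff_true, if_true]
        have h1 : c * l i ≤ c * max (l i) 0 :=
          mul_le_mul_of_nonneg_left (le_max_left _ _) hc0
        exact max_le (by linarith) (by linarith [hj.le])
      · simp only [if_neg hij, add_zero]
        calc max (c * l i + s) 0 ≤ max (c * l i) 0 :=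
              max_le_max (by linarith) le_rfl
          _ = c * max (l i) 0 := by
              rw [mul_max_of_nonneg _ _ hc0, mul_zero]
    calc ∑ i, max (c * l i + s) 0
        ≤ ∑ i, (c * max (l i) 0 + (if i = j then s else 0)) :=
          Finset.sum_le_sum fun i _ => hterm i
      _ = s + c * ∑ i, max (l i) 0 := by
          rw [Finset.sum_add_distrib, Finset.mul_sum]
          simp [add_comm]

/-- Lemma 3: contraction of the quantum hockey-stick divergence under the
depolarizing channel. -/
theorem quantum_hockeyStick_depolarize_le
    {n : Type*} [Fintype n] [DecidableEq n] [Nonempty n]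
    (ρ ρ' : Matrix n n ℂ)
    (hρ : ρ.IsHermitian) (hρpsd : ρ.PosSemidef) (hρtr : ρ.trace = 1)
    (hρ' : ρ'.IsHermitian) (hρ'psd : ρ'.PosSemidef) (hρ'tr : ρ'.trace = 1)
    (p γ : ℝ) (hp0 : 0 ≤ p) (hp1 : p ≤ 1) (hγ : 1 ≤ γ) :
    (matPosPart (depolarize p ρ - γ • depolarize p ρ')).trace.re
      ≤ max 0 ((1 - γ) * p / (Fintype.card n : ℝ)
          + (1 - p) * (matPosPart (ρ - γ • ρ')).trace.re) := by
  set d : ℝ := (Fintype.card n : ℝ) with hd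
  have hdpos : (0:ℝ) < d := by
    rw [hd]; exact_mod_cast Fintype.card_pos
  set c : ℝ := 1 - p with hc
  set s : ℝ := (1 - γ) * p / d with hsdef
  have hc0 : 0 ≤ c := by linarith
  have hs : s ≤ 0 := div_nonpos_of_nonpos_of_nonneg
    (mul_nonpos_of_nonpos_of_nonneg (by linarith) hp0) hdpos.le
  set B : Matrix n n ℂ := ρ - γ • ρ' with hBdef
  have hB : B.IsHermitian := by
    unfold Matrix.IsHermitian
    rw [hBdef, conjTranspose_sub, conjTranspose_smul, star_trivial, hρ.eq, hρ'.eq]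
  have hB' : IsSelfAdjoint B := hB
  have hD : depolarize p ρ - γ • depolarize p ρ' = c • B + s • (1 : Matrix n n ℂ) := by
    unfold depolarize
    rw [hBdef, hsdef, hc]
    rw [← hd]
    have : (1 - γ) * p / d = p / d - γ * (p / d) := by ring
    rw [this]
    module
  have hcomp : matPosPart (depolarize p ρ - γ • depolarize p ρ')
      = cfc (fun x : ℝ => max (c * x + s) 0) B := by
    rw [hD, ← cfc_affine hB c s, matPosPart]
    rw [← cfc_comp' (fun x : ℝ => max x 0) (fun x : ℝ => c * x + s) B
      (Continuous.continuousOn (by fun_prop)) (Continuous.continuousOn (by fun_prop))]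
  rw [hcomp, trace_cfc_re hB, matPosPart, trace_cfc_re hB]
  exact key_sum_ineq _ c s hc0 hs
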